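/- Let q be a real number with 0 < q < 1, ν₀ a nonzero real number, and c₀, d₀ complex numbers such that ν₀ q^{2k} ≠ q c₀ and ν₀ q^{2k} ≠ q d₀ for all k ∈ ℤ. On the ℂ-vector space of Laurent polynomials in ζ over ℂ, define X(ζ^k) = ν₀ q^{-2k} ζ^k, Z = multiplication by ζ, Z' = multiplication by ζ^{-1}, Y = Z∘(q^{-1}X − c₀·id), and Ŷ = −Z'∘(qX − d₀·id). Then the only ℂ-linear subspaces of the Laurent polynomials that are invariant under all three operators X, Y, Ŷ are the zero subspace and the whole space. -/

import Mathlib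

open LaurentPolynomial

lemma qh_aux_single (j : ℤ) (a : ℂ) :
    a • (T j : LaurentPolynomial ℂ) = AddMonoidAlgebra.single j a := by
  rw [T, AddMonoidAlgebra.smul_single', mul_one]

lemma qh_aux_coeff (s : Finset ℤ) (c : ℤ → ℂ) (m : ℤ) :
    (∑ j ∈ s, AddMonoidAlgebra.single j (c j) : LaurentPolynomial ℂ).coeff m
      = if m ∈ s then c m else 0 := by
  rw [AddMonoidAlgebra.coeff_sum, Finset.sum_apply']
  simp only [AddMonoidAlgebra.coeff_single, Finsupp.single_apply]
  exact Finset.sum_ite_eq' s m c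

lemma qh_aux_inj (q : ℝ) (hq0 : 0 < q) (hq1 : q < 1) (ν₀ : ℝ) (hν : ν₀ ≠ 0)
    (j k : ℤ) (h : (ν₀ : ℂ) * (q : ℂ) ^ (-(2 * j)) = (ν₀ : ℂ) * (q : ℂ) ^ (-(2 * k))) :
    j = k := by
  have hν' : (ν₀ : ℂ) ≠ 0 := by exact_mod_cast hν
  have h2 : (q : ℂ) ^ (-(2 * j)) = (q : ℂ) ^ (-(2 * k)) := mul_left_cancel₀ hν' h
  have h3 : ((q ^ (-(2 * j)) : ℝ) : ℂ) = ((q ^ (-(2 * k)) : ℝ) : ℂ) := by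
    push_cast; exact h2
  have h4 : q ^ (-(2 * j)) = q ^ (-(2 * k)) := by exact_mod_cast h3
  have h5 := congrArg Real.log h4
  rw [Real.log_zpow, Real.log_zpow] at h5
  have hlog : Real.log q ≠ 0 := ne_of_lt (Real.log_neg hq0 hq1)
  have h6 : ((-(2 * j) : ℤ) : ℝ) = ((-(2 * k) : ℤ) : ℝ) := mul_right_cancel₀ hlog h5
  have h7 : (-(2 * j) : ℤ) = -(2 * k) := by exact_mod_cast h6
  omega

/-- under the non-truncation hypotheses `ν₀q^{2k} ≠ qc₀, qd₀`, the
only subspaces of the Laurent polynomials invariant under the operators `X`,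
`Y`, `Ŷ` realizing the quantum hyperboloid module `Π_ν` are `⊥` and `⊤`. -/
theorem quantum_hyperboloid_module_simple
    (q : ℝ) (hq0 : 0 < q) (hq1 : q < 1)
    (ν₀ : ℝ) (hν : ν₀ ≠ 0) (c₀ d₀ : ℂ)
    (hc : ∀ k : ℤ, (ν₀ : ℂ) * (q : ℂ) ^ (2 * k) ≠ (q : ℂ) * c₀)
    (hd : ∀ k : ℤ, (ν₀ : ℂ) * (q : ℂ) ^ (2 * k) ≠ (q : ℂ) * d₀)
    (X Z Z' Y Yh : LaurentPolynomial ℂ →ₗ[ℂ] LaurentPolynomial ℂ)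
    (hX : ∀ k : ℤ, X (T k) = ((ν₀ : ℂ) * (q : ℂ) ^ (-(2 * k))) • T k)
    (hZ : ∀ f : LaurentPolynomial ℂ, Z f = T 1 * f)
    (hZ' : ∀ f : LaurentPolynomial ℂ, Z' f = T (-1) * f)
    (hY : Y = Z ∘ₗ (((q : ℂ))⁻¹ • X - c₀ • LinearMap.id))
    (hYh : Yh = -(Z' ∘ₗ ((q : ℂ) • X - d₀ • LinearMap.id))) :
    ∀ p : Submodule ℂ (LaurentPolynomial ℂ),
      (∀ f ∈ p, X f ∈ p) → (∀ f ∈ p, Y f ∈ p) → (∀ f ∈ p, Yh f ∈ p) →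
      p = ⊥ ∨ p = ⊤ := by
  intro p hXp hYp hYhp
  by_cases hbot : p = ⊥
  · exact Or.inl hbot
  right
  set lam : ℤ → ℂ := fun k => (ν₀ : ℂ) * (q : ℂ) ^ (-(2 * k)) with hlamdef
  have hqC : (q : ℂ) ≠ 0 := by exact_mod_cast hq0.ne'
  have hlaminj : Function.Injective lam := fun j k h =>
    qh_aux_inj q hq0 hq1 ν₀ hν j k h
  have hXT : ∀ k : ℤ, X (T k) = lam k • T k := hX
  have frep : ∀ f : LaurentPolynomial ℂ, f = ∑ j ∈ f.coeff.support, (f.coeff j) • T j := by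
    intro f
    conv_lhs => rw [← AddMonoidAlgebra.sum_coeff_single f, Finsupp.sum]
    exact Finset.sum_congr rfl fun j _ => (qh_aux_single j (f.coeff j)).symm
  have hXapp : ∀ f : LaurentPolynomial ℂ,
      X f = ∑ j ∈ f.coeff.support, (lam j * f.coeff j) • T j := by
    intro f
    conv_lhs => rw [← AddMonoidAlgebra.sum_coeff_single f, Finsupp.sum]
    rw [map_sum]
    refine Finset.sum_congr rfl fun j hj => ?_
    rw [← qh_aux_single, map_smul, hXT, smul_smul, mul_comm]
  -- Step 1: p contains some monomial T k
  have key : ∀ n : ℕ, ∀ f : LaurentPolynomial ℂ, f ∈ p → f ≠ 0 →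
      f.coeff.support.card ≤ n → ∃ k, T k ∈ p := by
    intro n
    induction n with
    | zero =>
      intro f _ hf0 hcard
      exact absurd (AddMonoidAlgebra.coeff_eq_zero.1 (Finsupp.support_eq_empty.1
        (Finset.card_eq_zero.1 (Nat.le_zero.1 hcard)))) hf0
    | succ n ih =>
      intro f hfp hf0 hcard
      obtain ⟨k, hk⟩ := (Finsupp.support_nonempty_iff.2 (mt AddMonoidAlgebra.coeff_eq_zero.1 hf0))
      have hsm : lam k • f = ∑ j ∈ f.coeff.support, (lam k * f.coeff j) • T j := by
        conv_lhs => rw [frep f]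
        rw [Finset.smul_sum]
        exact Finset.sum_congr rfl fun j _ => smul_smul _ _ _
      set g : LaurentPolynomial ℂ := X f - lam k • f with hgdef
      have hgp : g ∈ p := p.sub_mem (hXp f hfp) (p.smul_mem _ hfp)
      have hgrep : g = ∑ j ∈ f.coeff.support, ((lam j - lam k) * f.coeff j) • T j := by
        rw [hgdef, hXapp f, hsm, ← Finset.sum_sub_distrib]
        refine Finset.sum_congr rfl fun j _ => ?_
        rw [← sub_smul, ← sub_mul]
      have hgcoeff : ∀ m : ℤ, g.coeff m = if m ∈ f.coeff.support then (lam m - lam k) * f.coeff m else 0 := by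
        intro m
        rw [hgrep]
        simp only [qh_aux_single]
        exact qh_aux_coeff _ _ m
      by_cases hg0 : g = 0
      · -- f is supported on {k} only
        have hfk : f.coeff.support = {k} := by
          apply Finset.Subset.antisymm
          · intro j hj
            rw [Finset.mem_singleton]
            by_contra hjk
            have hz : g.coeff j = 0 := by rw [hg0]; rfl
            rw [hgcoeff j, if_pos hj] at hz
            rcases mul_eq_zero.1 hz with h | h
            · exact hjk (hlaminj (sub_eq_zero.1 h))
            · exact (Finsupp.mem_support_iff.1 hj) h
          · intro j hj
            rw [Finset.mem_singleton] at hj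
            exact hj ▸ hk
        obtain ⟨a, ha0, hfrep⟩ : ∃ a : ℂ, a ≠ 0 ∧ f = a • T k := by
          refine ⟨f.coeff k, Finsupp.mem_support_iff.1 hk, ?_⟩
          conv_lhs => rw [frep f, hfk, Finset.sum_singleton]
        refine ⟨k, ?_⟩
        have hm := p.smul_mem a⁻¹ hfp
        rwa [hfrep, smul_smul, inv_mul_cancel₀ ha0, one_smul] at hm
      · -- strictly smaller support, recurse
        have hsub : g.coeff.support ⊆ f.coeff.support.erase k := by
          intro m hm
          rw [Finsupp.mem_support_iff, hgcoeff m] at hm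
          by_cases hmf : m ∈ f.coeff.support
          · rw [if_pos hmf] at hm
            refine Finset.mem_erase.2 ⟨?_, hmf⟩
            rintro rfl
            exact hm (by rw [sub_self, zero_mul])
          · rw [if_neg hmf] at hm
            exact absurd rfl hm
        have hcard' : g.coeff.support.card ≤ n := by
          have h1 := Finset.card_le_card hsub
          have h2 : (f.coeff.support.erase k).card = f.coeff.support.card - 1 :=
            Finset.card_erase_of_mem hk
          omega
        exact ih g hgp hg0 hcard'
  -- Action of Y on monomials
  have hYT : ∀ k : ℤ, Y (T k) = ((q : ℂ)⁻¹ * lam k - c₀) • T (k + 1) := by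
    intro k
    rw [hY, LinearMap.comp_apply, LinearMap.sub_apply, LinearMap.smul_apply,
      LinearMap.smul_apply, LinearMap.id_apply, hXT, smul_smul, ← sub_smul,
      map_smul, hZ, ← T_add, show (1 + k : ℤ) = k + 1 from by ring]
  have hYhT : ∀ k : ℤ, Yh (T k) = (d₀ - (q : ℂ) * lam k) • T (k - 1) := by
    intro k
    rw [hYh, LinearMap.neg_apply, LinearMap.comp_apply, LinearMap.sub_apply,
      LinearMap.smul_apply, LinearMap.smul_apply, LinearMap.id_apply, hXT,
      smul_smul, ← sub_smul, map_smul, hZ', ← T_add,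
      show (-1 + k : ℤ) = k - 1 from by ring, ← neg_smul, neg_sub]
  -- nonvanishing of the structure constants
  have hYc : ∀ k : ℤ, (q : ℂ)⁻¹ * lam k - c₀ ≠ 0 := by
    intro k h
    apply hc (-k)
    have h' : c₀ = (q : ℂ)⁻¹ * lam k := (sub_eq_zero.1 h).symm
    rw [h', mul_inv_cancel_left₀ hqC, show (2 * (-k) : ℤ) = -(2 * k) from by ring,
      hlamdef]
  have hYhc : ∀ k : ℤ, d₀ - (q : ℂ) * lam k ≠ 0 := by
    intro k h
    apply hd (1 - k)
    have h' : d₀ = (q : ℂ) * lam k := sub_eq_zero.1 h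
    rw [h', hlamdef]
    show (ν₀ : ℂ) * (q : ℂ) ^ (2 * (1 - k)) = (q : ℂ) * ((q : ℂ) * ((ν₀ : ℂ) * (q : ℂ) ^ (-(2 * k))))
    rw [show (2 * (1 - k) : ℤ) = 1 + (1 + -(2 * k)) from by ring,
      zpow_add₀ hqC, zpow_add₀ hqC, zpow_one]
    ring
  -- closure under raising and lowering
  have up : ∀ j : ℤ, T j ∈ p → T (j + 1) ∈ p := by
    intro j hj
    have h1 : Y (T j) ∈ p := hYp _ hj
    rw [hYT j] at h1
    have h2 := p.smul_mem ((q : ℂ)⁻¹ * lam j - c₀)⁻¹ h1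
    rwa [smul_smul, inv_mul_cancel₀ (hYc j), one_smul] at h2
  have down : ∀ j : ℤ, T j ∈ p → T (j - 1) ∈ p := by
    intro j hj
    have h1 : Yh (T j) ∈ p := hYhp _ hj
    rw [hYhT j] at h1
    have h2 := p.smul_mem (d₀ - (q : ℂ) * lam j)⁻¹ h1
    rwa [smul_smul, inv_mul_cancel₀ (hYhc j), one_smul] at h2
  -- all monomials belong to p
  obtain ⟨f, hfp, hf0⟩ := (Submodule.ne_bot_iff p).1 hbot
  obtain ⟨k, hk⟩ := key f.coeff.support.card f hfp hf0 le_rfl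
  have upn : ∀ n : ℕ, T (k + n) ∈ p := by
    intro n
    induction n with
    | zero => simpa using hk
    | succ n ih =>
      have h1 := up _ ih
      have h2 : (k + (n : ℤ)) + 1 = k + ((n : ℕ) + 1 : ℕ) := by push_cast; ring
      rwa [h2] at h1
  have downn : ∀ n : ℕ, T (k - n) ∈ p := by
    intro n
    induction n with
    | zero => simpa using hk
    | succ n ih =>
      have h1 := down _ ih
      have h2 : (k - (n : ℤ)) - 1 = k - ((n : ℕ) + 1 : ℕ) := by push_cast; ring
      rwa [h2] at h1
  have allT : ∀ m : ℤ, T m ∈ p := by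
    intro m
    rcases le_total k m with h | h
    · have h1 := upn (m - k).toNat
      rwa [Int.toNat_of_nonneg (by omega), show k + (m - k) = m from by ring] at h1
    · have h1 := downn (k - m).toNat
      rwa [Int.toNat_of_nonneg (by omega), show k - (k - m) = m from by ring] at h1
  -- conclude p = ⊤
  rw [eq_top_iff]
  intro f _
  rw [frep f]
  exact Submodule.sum_mem p fun j _ => p.smul_mem _ (allT j)
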